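/- Let u : ℝ → ℝ be Lipschitz continuous and f : [0,T] → ℝ be in L¹([0,T]). Then the integral equation X(t) = ∫_0^t u(X(s)) ds + f(t), t ∈ [0,T], has a unique solution X ∈ L¹([0,T]). -/

import Mathlib

open MeasureTheory intervalIntegral Set Filter Nat Topology

noncomputable def picardSeq (u f : ℝ → ℝ) : ℕ → ℝ → ℝ
  | 0 => f
  | n + 1 => fun t => (∫ s in (0:ℝ)..t, u (picardSeq u f n s)) + f t

lemma lip_comp_integrableOn {u : ℝ → ℝ} {K : NNReal} (hu : LipschitzWith K u)
    {X : ℝ → ℝ} {a b : ℝ} (hX : IntegrableOn X (Icc a b)) :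
    IntegrableOn (fun t => u (X t)) (Icc a b) := by
  refine Integrable.mono' (g := fun t => |u 0| + (K : ℝ) * |X t|)
    ((integrableOn_const (by simp [Real.volume_Icc])).add (hX.abs.const_mul _))
    (hu.continuous.comp_aestronglyMeasurable hX.aestronglyMeasurable) ?_
  filter_upwards with t
  have h1 : |u (X t) - u 0| ≤ (K : ℝ) * |X t| := by
    simpa [Real.dist_eq] using hu.dist_le_mul (X t) 0
  have h2 : |u (X t)| - |u 0| ≤ |u (X t) - u 0| := abs_sub_abs_le_abs_sub _ _
  simp only [Real.norm_eq_abs]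
  linarith

lemma ii_of_integrableOn {g : ℝ → ℝ} {T t : ℝ} (hg : IntegrableOn g (Icc 0 T))
    (ht : t ∈ Icc 0 T) : IntervalIntegrable g volume 0 t := by
  rw [intervalIntegrable_iff_integrableOn_Ioc_of_le ht.1]
  exact hg.mono_set (Ioc_subset_Icc_self.trans (Icc_subset_Icc_right ht.2))

lemma lip_integral_bound {u : ℝ → ℝ} {K : NNReal} (hu : LipschitzWith K u)
    {A B : ℝ → ℝ} {T t : ℝ} (hA : IntegrableOn A (Icc 0 T)) (hB : IntegrableOn B (Icc 0 T))
    (ht : t ∈ Icc 0 T) :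
    |∫ s in (0:ℝ)..t, (u (A s) - u (B s))| ≤ ∫ s in (0:ℝ)..t, (K : ℝ) * |A s - B s| := by
  have hiA := ii_of_integrableOn (lip_comp_integrableOn hu hA) ht
  have hiB := ii_of_integrableOn (lip_comp_integrableOn hu hB) ht
  refine (intervalIntegral.abs_integral_le_integral_abs ht.1).trans ?_
  refine intervalIntegral.integral_mono_on ht.1 (hiA.sub hiB).abs
    (((ii_of_integrableOn (hA.sub hB) ht).abs).const_mul _) ?_
  intro s _
  simpa [Real.dist_eq] using hu.dist_le_mul (A s) (B s)

lemma picard_integral_pow (Kr C : ℝ) (n : ℕ) (t : ℝ) :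
    (∫ s in (0:ℝ)..t, Kr * (C * ((Kr * s) ^ n / n !)))
      = C * ((Kr * t) ^ (n + 1) / (n + 1)!) := by
  have h : ∀ s : ℝ, Kr * (C * ((Kr * s) ^ n / n !)) = (Kr ^ (n + 1) * C / n !) * s ^ n := by
    intro s; rw [mul_pow]; ring
  simp only [h]
  rw [intervalIntegral.integral_const_mul, integral_pow]
  have h1 : (n ! : ℝ) ≠ 0 := Nat.cast_ne_zero.mpr (Nat.factorial_ne_zero n)
  have h2 : ((n : ℝ) + 1) ≠ 0 := by positivity
  have hfac : (((n + 1)! : ℕ) : ℝ) = ((n : ℝ) + 1) * (n ! : ℝ) := by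
    push_cast [Nat.factorial_succ]; ring
  rw [mul_pow, hfac, zero_pow (Nat.succ_ne_zero n)]
  field_simp
  ring

lemma step_bound {Kr C : ℝ} (hK : 0 ≤ Kr) {ψ : ℝ → ℝ} {t T : ℝ} {n : ℕ} (ht : t ∈ Icc 0 T)
    (hψ : IntervalIntegrable ψ volume 0 t)
    (hb : ∀ s ∈ Icc 0 t, ψ s ≤ C * ((Kr * s) ^ n / n !)) :
    Kr * (∫ s in (0:ℝ)..t, ψ s) ≤ C * ((Kr * t) ^ (n + 1) / (n + 1)!) := by
  rw [← picard_integral_pow Kr C n t, ← intervalIntegral.integral_const_mul]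
  have hcont : Continuous fun s : ℝ => Kr * (C * ((Kr * s) ^ n / n !)) := by fun_prop
  refine intervalIntegral.integral_mono_on ht.1 (hψ.const_mul _)
    (hcont.intervalIntegrable _ _) ?_
  intro s hs
  exact mul_le_mul_of_nonneg_left (hb s hs) hK

theorem stmt_12 (T : ℝ) (hT : 0 < T) (u : ℝ → ℝ) (K : NNReal)
    (hu : LipschitzWith K u) (f : ℝ → ℝ) (hf : IntegrableOn f (Set.Icc 0 T)) :
    ∃ X : ℝ → ℝ, IntegrableOn X (Set.Icc 0 T) ∧
      (∀ᵐ t ∂(volume.restrict (Set.Icc 0 T)),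
        X t = (∫ s in (0:ℝ)..t, u (X s)) + f t) ∧
      ∀ Y : ℝ → ℝ, IntegrableOn Y (Set.Icc 0 T) →
        (∀ᵐ t ∂(volume.restrict (Set.Icc 0 T)),
          Y t = (∫ s in (0:ℝ)..t, u (Y s)) + f t) →
        Y =ᵐ[volume.restrict (Set.Icc 0 T)] X := by
  classical
  have hT0 : (0:ℝ) ≤ T := hT.le
  set P : ℕ → ℝ → ℝ := picardSeq u f with hP
  -- integrability of the Picard iterates
  have hPint : ∀ n, IntegrableOn (P n) (Set.Icc 0 T) := by
    intro n
    induction n with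
    | zero => exact hf
    | succ n ih =>
      have hcomp := lip_comp_integrableOn hu ih
      have hcont : ContinuousOn (fun t => ∫ s in (0:ℝ)..t, u (P n s)) (Set.Icc 0 T) := by
        have := continuousOn_primitive_interval (a := (0:ℝ)) (b := T) (μ := volume)
          (f := fun s => u (P n s)) (by rwa [Set.uIcc_of_le hT0])
        rwa [Set.uIcc_of_le hT0] at this
      have : IntegrableOn (fun t => (∫ s in (0:ℝ)..t, u (P n s)) + f t) (Set.Icc 0 T) :=
        (hcont.integrableOn_Icc).add hf
      simpa [hP, picardSeq] using this
  set C : ℝ := ∫ s in (0:ℝ)..T, |u (f s)| with hCdef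
  have hC0 : 0 ≤ C := intervalIntegral.integral_nonneg hT0 fun s _ => abs_nonneg _
  -- growth estimate for consecutive iterates
  have hgrow : ∀ n, ∀ t ∈ Set.Icc (0:ℝ) T,
      |P (n + 1) t - P n t| ≤ C * (((K : ℝ) * t) ^ n / n !) := by
    intro n
    induction n with
    | zero =>
      intro t ht
      have h1 : P 1 t - P 0 t = ∫ s in (0:ℝ)..t, u (f s) := by simp [hP, picardSeq]
      rw [h1]
      refine (intervalIntegral.abs_integral_le_integral_abs ht.1).trans ?_
      have h3 : (∫ s in (0:ℝ)..t, |u (f s)|) ≤ ∫ s in (0:ℝ)..T, |u (f s)| :=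
        intervalIntegral.integral_mono_interval le_rfl ht.1 ht.2
          (Filter.Eventually.of_forall fun s => abs_nonneg _)
          (ii_of_integrableOn (lip_comp_integrableOn hu hf).abs ⟨hT0, le_rfl⟩)
      simpa using h3
    | succ n ih =>
      intro t ht
      have hA := hPint (n + 1)
      have hB := hPint n
      have hsub : P (n + 1 + 1) t - P (n + 1) t
          = ∫ s in (0:ℝ)..t, (u (P (n + 1) s) - u (P n s)) := by
        have e1 : P (n + 1 + 1) t = (∫ s in (0:ℝ)..t, u (P (n + 1) s)) + f t := by
          simp [hP, picardSeq]
        have e2 : P (n + 1) t = (∫ s in (0:ℝ)..t, u (P n s)) + f t := by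
          simp [hP, picardSeq]
        rw [e1, e2, intervalIntegral.integral_sub
          (ii_of_integrableOn (lip_comp_integrableOn hu hA) ht)
          (ii_of_integrableOn (lip_comp_integrableOn hu hB) ht)]
        ring
      rw [hsub]
      have h1 := lip_integral_bound hu hA hB ht
      rw [intervalIntegral.integral_const_mul] at h1
      refine h1.trans ?_
      exact step_bound K.coe_nonneg ht ((ii_of_integrableOn (hA.sub hB) ht).abs)
        (fun s hs => ih s ⟨hs.1, hs.2.trans ht.2⟩)
  set d : ℕ → ℝ := fun n => C * (((K : ℝ) * T) ^ n / n !) with hd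
  have hKT0 : 0 ≤ (K : ℝ) * T := mul_nonneg K.coe_nonneg hT0
  have hd0 : ∀ n, 0 ≤ d n := fun n =>
    mul_nonneg hC0 (div_nonneg (pow_nonneg hKT0 n) (by positivity))
  have hdsum : Summable d := (Real.summable_pow_div_factorial ((K : ℝ) * T)).mul_left C
  have hgrow' : ∀ n, ∀ t ∈ Set.Icc (0:ℝ) T, |P (n + 1) t - P n t| ≤ d n := by
    intro n t ht
    refine (hgrow n t ht).trans ?_
    have hKt : (K : ℝ) * t ≤ (K : ℝ) * T := mul_le_mul_of_nonneg_left ht.2 K.coe_nonneg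
    have hKt0 : 0 ≤ (K : ℝ) * t := mul_nonneg K.coe_nonneg ht.1
    have hpow := pow_le_pow_left₀ hKt0 hKt n
    exact mul_le_mul_of_nonneg_left
      ((div_le_div_iff_of_pos_right (by positivity : (0:ℝ) < n !)).mpr hpow) hC0
  have hdist : ∀ t ∈ Set.Icc (0:ℝ) T, ∀ n, dist (P n t) (P (n + 1) t) ≤ d n := by
    intro t ht n
    rw [Real.dist_eq, abs_sub_comm]
    exact hgrow' n t ht
  set X : ℝ → ℝ := fun t => limUnder atTop (fun n => P n t) with hX
  have htend : ∀ t ∈ Set.Icc (0:ℝ) T, Tendsto (fun n => P n t) atTop (𝓝 (X t)) := fun t ht =>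
    (cauchySeq_of_dist_le_of_summable d (hdist t ht) hdsum).tendsto_limUnder
  set tail : ℕ → ℝ := fun n => ∑' m, d (n + m) with htail
  have hunif : ∀ n, ∀ t ∈ Set.Icc (0:ℝ) T, |P n t - X t| ≤ tail n := by
    intro n t ht
    have := dist_le_tsum_of_dist_le_of_tendsto d (hdist t ht) hdsum (htend t ht) n
    rwa [Real.dist_eq] at this
  have htail0 : Tendsto tail atTop (𝓝 0) := by
    have h := tendsto_sum_nat_add d
    exact h.congr fun n => tsum_congr fun k => by rw [add_comm]
  have htail_nonneg : ∀ n, 0 ≤ tail n := fun n => tsum_nonneg fun m => hd0 _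
  -- integrability of X
  have hXint : IntegrableOn X (Set.Icc 0 T) := by
    have hmeas : AEStronglyMeasurable X (volume.restrict (Set.Icc 0 T)) := by
      refine aestronglyMeasurable_of_tendsto_ae atTop
        (fun n => (hPint n).aestronglyMeasurable) ?_
      filter_upwards [ae_restrict_mem measurableSet_Icc] with t ht using htend t ht
    refine Integrable.mono' (g := fun t => |f t| + tail 0)
      (hf.abs.add (integrableOn_const (by simp [Real.volume_Icc]))) hmeas ?_
    filter_upwards [ae_restrict_mem measurableSet_Icc] with t ht
    have h1 := hunif 0 t ht
    have h0 : P 0 t = f t := rfl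
    rw [h0, abs_sub_comm] at h1
    have h2 : |X t| - |f t| ≤ |X t - f t| := abs_sub_abs_le_abs_sub _ _
    simp only [Real.norm_eq_abs]
    linarith
  -- fixed point property, pointwise on Icc 0 T
  have hcompX := lip_comp_integrableOn hu hXint
  have hXfix : ∀ t ∈ Set.Icc (0:ℝ) T, X t = (∫ s in (0:ℝ)..t, u (X s)) + f t := by
    intro t ht
    have hlim1 : Tendsto (fun n => P (n + 1) t) atTop (𝓝 (X t)) :=
      (htend t ht).comp (tendsto_add_atTop_nat 1)
    have hlim1' : Tendsto (fun n => (∫ s in (0:ℝ)..t, u (P n s)) + f t) atTop (𝓝 (X t)) :=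
      hlim1.congr fun n => by simp [hP, picardSeq]
    have hlim2 : Tendsto (fun n => (∫ s in (0:ℝ)..t, u (P n s)) + f t) atTop
        (𝓝 ((∫ s in (0:ℝ)..t, u (X s)) + f t)) := by
      refine Tendsto.add_const _ ?_
      rw [tendsto_iff_dist_tendsto_zero]
      have hK0 : (0:ℝ) ≤ (K : ℝ) := K.coe_nonneg
      refine squeeze_zero (fun n => dist_nonneg) (fun n => ?_)
        (by simpa using htail0.const_mul ((K : ℝ) * T))
      have hsubi : dist (∫ s in (0:ℝ)..t, u (P n s)) (∫ s in (0:ℝ)..t, u (X s))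
          = |∫ s in (0:ℝ)..t, (u (P n s) - u (X s))| := by
        rw [Real.dist_eq, intervalIntegral.integral_sub
          (ii_of_integrableOn (lip_comp_integrableOn hu (hPint n)) ht)
          (ii_of_integrableOn hcompX ht)]
      rw [hsubi]
      refine (lip_integral_bound hu (hPint n) hXint ht).trans ?_
      rw [intervalIntegral.integral_const_mul]
      have hmono : (∫ s in (0:ℝ)..t, |P n s - X s|) ≤ ∫ s in (0:ℝ)..t, tail n := by
        refine intervalIntegral.integral_mono_on ht.1
          ((ii_of_integrableOn ((hPint n).sub hXint) ht).abs)
          (intervalIntegrable_const) ?_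
        intro s hs
        exact hunif n s ⟨hs.1, hs.2.trans ht.2⟩
      rw [intervalIntegral.integral_const, smul_eq_mul, sub_zero] at hmono
      calc (K : ℝ) * ∫ s in (0:ℝ)..t, |P n s - X s|
          ≤ (K : ℝ) * (t * tail n) := mul_le_mul_of_nonneg_left hmono hK0
        _ = ((K : ℝ) * t) * tail n := by ring
        _ ≤ ((K : ℝ) * T) * tail n :=
            mul_le_mul_of_nonneg_right (mul_le_mul_of_nonneg_left ht.2 hK0)
              (htail_nonneg n)
    exact tendsto_nhds_unique hlim1' hlim2
  refine ⟨X, hXint, ?_, ?_⟩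
  · filter_upwards [ae_restrict_mem measurableSet_Icc] with t ht
    exact hXfix t ht
  -- uniqueness
  intro Y hYint hYeq
  have hDint : IntegrableOn (fun s => |Y s - X s|) (Set.Icc 0 T) := (hYint.sub hXint).abs
  set ph : ℝ → ℝ := fun t => ∫ s in (0:ℝ)..t, |Y s - X s| with hph
  have hphcont : ContinuousOn ph (Set.Icc 0 T) := by
    have := continuousOn_primitive_interval (a := (0:ℝ)) (b := T) (μ := volume)
      (f := fun s => |Y s - X s|) (by rwa [Set.uIcc_of_le hT0])
    rwa [Set.uIcc_of_le hT0] at this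
  have hphnonneg : ∀ t ∈ Set.Icc (0:ℝ) T, 0 ≤ ph t := fun t ht =>
    intervalIntegral.integral_nonneg ht.1 fun s _ => abs_nonneg _
  obtain ⟨M, hM⟩ := (isCompact_Icc (a := (0:ℝ)) (b := T)).exists_bound_of_continuousOn hphcont
  have hae : ∀ᵐ t ∂(volume.restrict (Set.Icc (0:ℝ) T)), |Y t - X t| ≤ (K : ℝ) * ph t := by
    filter_upwards [hYeq, ae_restrict_mem measurableSet_Icc] with t h1 h2
    have h3 : Y t - X t = ∫ s in (0:ℝ)..t, (u (Y s) - u (X s)) := by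
      rw [h1, hXfix t h2, intervalIntegral.integral_sub
        (ii_of_integrableOn (lip_comp_integrableOn hu hYint) h2)
        (ii_of_integrableOn hcompX h2)]
      ring
    calc |Y t - X t| = |∫ s in (0:ℝ)..t, (u (Y s) - u (X s))| := by rw [h3]
      _ ≤ ∫ s in (0:ℝ)..t, (K : ℝ) * |Y s - X s| := lip_integral_bound hu hYint hXint h2
      _ = (K : ℝ) * ph t := by rw [intervalIntegral.integral_const_mul]
  have hphle : ∀ t ∈ Set.Icc (0:ℝ) T, ph t ≤ (K : ℝ) * ∫ s in (0:ℝ)..t, ph s := by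
    intro t ht
    have hmono : ph t ≤ ∫ s in (0:ℝ)..t, (K : ℝ) * ph s := by
      refine intervalIntegral.integral_mono_ae_restrict ht.1 (ii_of_integrableOn hDint ht)
        ((ii_of_integrableOn hphcont.integrableOn_Icc ht).const_mul _) ?_
      exact ae_restrict_of_ae_restrict_of_subset (Set.Icc_subset_Icc_right ht.2) hae
    rwa [intervalIntegral.integral_const_mul] at hmono
  have hphiter : ∀ n, ∀ t ∈ Set.Icc (0:ℝ) T, ph t ≤ M * (((K : ℝ) * t) ^ n / n !) := by
    intro n
    induction n with
    | zero =>
      intro t ht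
      have := (le_abs_self (ph t)).trans (hM t ht)
      simpa using this
    | succ n ih =>
      intro t ht
      refine (hphle t ht).trans ?_
      exact step_bound K.coe_nonneg ht (ii_of_integrableOn hphcont.integrableOn_Icc ht)
        (fun s hs => ih s ⟨hs.1, hs.2.trans ht.2⟩)
  have hphzero : ∀ t ∈ Set.Icc (0:ℝ) T, ph t = 0 := by
    intro t ht
    refine le_antisymm ?_ (hphnonneg t ht)
    have hlim : Tendsto (fun n => M * (((K : ℝ) * t) ^ n / n !)) atTop (𝓝 0) := by
      simpa using (FloorSemiring.tendsto_pow_div_factorial_atTop ((K : ℝ) * t)).const_mul M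
    exact ge_of_tendsto' hlim fun n => hphiter n t ht
  have h5 : ∫ s in Set.Ioc (0:ℝ) T, |Y s - X s| = 0 := by
    have h5' : (∫ s in (0:ℝ)..T, |Y s - X s|) = 0 := hphzero T ⟨hT0, le_rfl⟩
    rwa [intervalIntegral.integral_of_le hT0] at h5'
  have h6 : (fun s => |Y s - X s|) =ᵐ[volume.restrict (Set.Ioc (0:ℝ) T)] 0 :=
    (integral_eq_zero_iff_of_nonneg_ae
      (Filter.Eventually.of_forall fun s => abs_nonneg _)
      (hDint.mono_set Set.Ioc_subset_Icc_self)).mp h5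
  have h7 : (fun s => |Y s - X s|) =ᵐ[volume.restrict (Set.Icc (0:ℝ) T)] 0 := by
    rwa [← Measure.restrict_congr_set Ioc_ae_eq_Icc]
  filter_upwards [h7] with t ht
  have : |Y t - X t| = 0 := ht
  exact sub_eq_zero.mp (abs_eq_zero.mp this)
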